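/- Let P : [0, T] → ℝ be continuous and define, for t ∈ [0, T], Q(t) = e^{−G(t)}·( ∫_0^t e^{G(s)}·( ∫_s^T f₁(s,r,T)·(P(r)/(2α)) dr ) ds − ∫_0^t e^{G(s)}·(P(s)/(2α)) ds ), where G(t) = ωt − log(1 + u·e^{−2ω(T−t)}). Then Q(0) = 0 and Q is differentiable on [0, T] with Q′(t) = −q(t), where q(t) = ω·f(t,T)·Q(t) − ∫_t^T f₁(t,r,T)·(P(r)/(2α)) dr + P(t)/(2α). -/

import Mathlib

open Set intervalIntegral

/-- Let `P : [0,T] → ℝ` be continuous and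
`Q(t) = e^{−G(t)}·(∫_0^t e^{G(s)}·(∫_s^T f₁(s,r,T)·(P(r)/(2α)) dr) ds − ∫_0^t e^{G(s)}·(P(s)/(2α)) ds)`
with `G(t) = ωt − log(1 + u·e^{−2ω(T−t)})`.  Then `Q(0) = 0` and `Q` is differentiable
on `[0, T]` with `Q′(t) = −q(t)`, where
`q(t) = ω·f(t,T)·Q(t) − ∫_t^T f₁(t,r,T)·(P(r)/(2α)) dr + P(t)/(2α)`. -/
theorem stmt_8 (α β γ T : ℝ) (hα : 0 < α) (hβ : 0 < β) (hγ : 0 < γ) (hT : 0 < T)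
    (ω u : ℝ) (hω : ω = Real.sqrt (β / α))
    (hu : u = (Real.sqrt (α * β) - γ) / (Real.sqrt (α * β) + γ))
    (f : ℝ → ℝ)
    (hf : ∀ t, f t = (1 - u * Real.exp (-2 * ω * (T - t))) /
      (1 + u * Real.exp (-2 * ω * (T - t))))
    (f₁ : ℝ → ℝ → ℝ)
    (hf₁ : ∀ t s, f₁ t s = ω * (Real.exp (-ω * (s - t)) - u * Real.exp (-ω * (2 * T - s - t))) /
      (1 + u * Real.exp (-2 * ω * (T - t))))
    (G : ℝ → ℝ)
    (hG : ∀ t, G t = ω * t - Real.log (1 + u * Real.exp (-2 * ω * (T - t))))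
    (P : ℝ → ℝ) (hP : ContinuousOn P (Set.Icc 0 T))
    (Q : ℝ → ℝ)
    (hQ : ∀ t, Q t = Real.exp (-G t) *
      ((∫ s in (0:ℝ)..t, Real.exp (G s) * ∫ r in s..T, f₁ s r * (P r / (2 * α))) -
        ∫ s in (0:ℝ)..t, Real.exp (G s) * (P s / (2 * α))))
    (q : ℝ → ℝ)
    (hq : ∀ t, q t = ω * f t * Q t - (∫ r in t..T, f₁ t r * (P r / (2 * α))) +
      P t / (2 * α)) :
    Q 0 = 0 ∧
      ∀ t ∈ Set.Icc (0 : ℝ) T, HasDerivWithinAt Q (-q t) (Set.Icc 0 T) t := by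
  have hQ0 : Q 0 = 0 := by rw [hQ]; simp
  refine ⟨hQ0, ?_⟩
  -- basic positivity facts
  have hωpos : 0 < ω := by rw [hω]; exact Real.sqrt_pos.2 (div_pos hβ hα)
  have hspos : 0 < Real.sqrt (α * β) := Real.sqrt_pos.2 (mul_pos hα hβ)
  have hd : (0:ℝ) < Real.sqrt (α * β) + γ := by positivity
  have huabs : |u| < 1 := by
    rw [hu, abs_div, abs_of_pos hd, div_lt_one hd]
    exact abs_lt.2 ⟨by linarith, by linarith⟩
  -- positivity of the denominator on [0,T]
  have hDpos : ∀ t ∈ Set.Icc (0:ℝ) T, 0 < 1 + u * Real.exp (-2 * ω * (T - t)) := by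
    rintro t ⟨ht0, htT⟩
    have hE1 : Real.exp (-2 * ω * (T - t)) ≤ 1 := by
      rw [Real.exp_le_one_iff]; nlinarith
    have hE0 : 0 < Real.exp (-2 * ω * (T - t)) := Real.exp_pos _
    have h1 : -|u| ≤ u := neg_abs_le u
    nlinarith [abs_nonneg u]
  -- exp (G t) on [0,T]
  have hexpG : ∀ t ∈ Set.Icc (0:ℝ) T,
      Real.exp (G t) = Real.exp (ω * t) / (1 + u * Real.exp (-2 * ω * (T - t))) := by
    intro t ht
    rw [hG, Real.exp_sub, Real.exp_log (hDpos t ht)]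
  -- key factorization of f₁
  have hf₁' : ∀ s ∈ Set.Icc (0:ℝ) T, ∀ r, f₁ s r * (P r / (2 * α)) =
      (ω * Real.exp (G s)) *
        ((Real.exp (-ω * r) - u * Real.exp (-ω * (2 * T - r))) * (P r / (2 * α))) := by
    intro s hs r
    rw [hf₁, hexpG s hs,
      show -ω * (r - s) = ω * s + -ω * r by ring, Real.exp_add,
      show -ω * (2 * T - r - s) = ω * s + -ω * (2 * T - r) by ring, Real.exp_add]
    field_simp
  -- the function c and its properties
  have hccont : ContinuousOn
      (fun r => (Real.exp (-ω * r) - u * Real.exp (-ω * (2 * T - r))) * (P r / (2 * α)))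
      (Set.Icc 0 T) := by
    apply ContinuousOn.mul _ (hP.div_const _)
    exact ((Real.continuous_exp.comp (continuous_const.mul continuous_id)).sub
      (continuous_const.mul (Real.continuous_exp.comp
        (continuous_const.mul (continuous_const.sub continuous_id))))).continuousOn
  have hcint : ∀ a ∈ Set.Icc (0:ℝ) T, ∀ b ∈ Set.Icc (0:ℝ) T,
      IntervalIntegrable
        (fun r => (Real.exp (-ω * r) - u * Real.exp (-ω * (2 * T - r))) * (P r / (2 * α)))
        MeasureTheory.volume a b := fun a ha b hb =>
    (hccont.mono (Set.uIcc_subset_Icc ha hb)).intervalIntegrable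
  -- FTC for K
  have hK : ∀ x ∈ Set.Icc (0:ℝ) T, HasDerivWithinAt
      (fun x => ∫ r in (0:ℝ)..x,
        (Real.exp (-ω * r) - u * Real.exp (-ω * (2 * T - r))) * (P r / (2 * α)))
      ((Real.exp (-ω * x) - u * Real.exp (-ω * (2 * T - x))) * (P x / (2 * α)))
      (Set.Icc 0 T) x := by
    intro x hx
    haveI : Fact (x ∈ Set.Icc (0:ℝ) T) := ⟨hx⟩
    exact intervalIntegral.integral_hasDerivWithinAt_right
      (hcint 0 (Set.left_mem_Icc.2 hT.le) x hx)
      (hccont.stronglyMeasurableAtFilter_nhdsWithin measurableSet_Icc x)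
      (hccont x hx)
  have hKcont : ContinuousOn
      (fun x => ∫ r in (0:ℝ)..x,
        (Real.exp (-ω * r) - u * Real.exp (-ω * (2 * T - r))) * (P r / (2 * α)))
      (Set.Icc 0 T) := fun x hx => (hK x hx).continuousWithinAt
  -- rewriting the inner integral
  have hIeq : ∀ s ∈ Set.Icc (0:ℝ) T,
      (∫ r in s..T, f₁ s r * (P r / (2 * α))) =
      (ω * Real.exp (G s)) *
        ((∫ r in (0:ℝ)..T,
          (Real.exp (-ω * r) - u * Real.exp (-ω * (2 * T - r))) * (P r / (2 * α))) -
         ∫ r in (0:ℝ)..s,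
          (Real.exp (-ω * r) - u * Real.exp (-ω * (2 * T - r))) * (P r / (2 * α))) := by
    intro s hs
    rw [show (∫ r in s..T, f₁ s r * (P r / (2 * α))) =
        ∫ r in s..T, (ω * Real.exp (G s)) *
          ((Real.exp (-ω * r) - u * Real.exp (-ω * (2 * T - r))) * (P r / (2 * α))) from
      intervalIntegral.integral_congr (fun r _ => hf₁' s hs r)]
    rw [intervalIntegral.integral_const_mul,
      intervalIntegral.integral_interval_sub_left
        (hcint 0 (Set.left_mem_Icc.2 hT.le) T (Set.right_mem_Icc.2 hT.le))
        (hcint 0 (Set.left_mem_Icc.2 hT.le) s hs)]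
  -- continuity of exp ∘ G on [0,T]
  have hGcont : ContinuousOn G (Set.Icc 0 T) := by
    rw [funext hG]
    exact (continuous_const.mul continuous_id).continuousOn.sub
      ((continuous_const.add (continuous_const.mul
        (Real.continuous_exp.comp
          (continuous_const.mul (continuous_const.sub continuous_id))))).continuousOn.log
        (fun t ht => (hDpos t ht).ne'))
  have hexpGcont : ContinuousOn (fun s => Real.exp (G s)) (Set.Icc 0 T) :=
    Real.continuous_exp.comp_continuousOn hGcont
  -- continuity of the integrands F1, F2
  have hF1cont : ContinuousOn
      (fun s => Real.exp (G s) * ∫ r in s..T, f₁ s r * (P r / (2 * α)))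
      (Set.Icc 0 T) := by
    refine ContinuousOn.congr
      (f := fun s => Real.exp (G s) * ((ω * Real.exp (G s)) *
        ((∫ r in (0:ℝ)..T,
          (Real.exp (-ω * r) - u * Real.exp (-ω * (2 * T - r))) * (P r / (2 * α))) -
         ∫ r in (0:ℝ)..s,
          (Real.exp (-ω * r) - u * Real.exp (-ω * (2 * T - r))) * (P r / (2 * α)))))
      ?_ ?_
    · exact hexpGcont.mul ((continuousOn_const.mul hexpGcont).mul
        (continuousOn_const.sub hKcont))
    · intro s hs
      simp only [hIeq s hs]
  have hF2cont : ContinuousOn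
      (fun s => Real.exp (G s) * (P s / (2 * α))) (Set.Icc 0 T) :=
    hexpGcont.mul (hP.div_const _)
  -- derivative of G
  have hGder : ∀ t ∈ Set.Icc (0:ℝ) T, HasDerivWithinAt G (ω * f t) (Set.Icc 0 T) t := by
    intro t ht
    have hinner : HasDerivAt (fun t : ℝ => -2 * ω * (T - t)) (2 * ω) t := by
      have := ((hasDerivAt_id t).const_sub T).const_mul (-2 * ω)
      simpa using this
    have hE : HasDerivAt (fun t : ℝ => Real.exp (-2 * ω * (T - t)))
        (Real.exp (-2 * ω * (T - t)) * (2 * ω)) t := hinner.exp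
    have hDder : HasDerivAt (fun t : ℝ => 1 + u * Real.exp (-2 * ω * (T - t)))
        (u * (Real.exp (-2 * ω * (T - t)) * (2 * ω))) t := by
      exact ((hasDerivAt_const t (1:ℝ)).add (hE.const_mul u)).congr_deriv (by ring)
    have hlog := hDder.log (hDpos t ht).ne'
    have hGd : HasDerivAt G
        (ω - u * (Real.exp (-2 * ω * (T - t)) * (2 * ω)) /
          (1 + u * Real.exp (-2 * ω * (T - t)))) t := by
      rw [funext hG]
      exact (((hasDerivAt_id t).const_mul ω).sub hlog).congr_deriv (by ring)
    have := hGd.hasDerivWithinAt (s := Set.Icc 0 T)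
    refine this.congr_deriv ?_
    symm
    have hDne := (hDpos t ht).ne'
    rw [hf]
    set E := Real.exp (-2 * ω * (T - t)) with hE
    field_simp
    ring
  -- main derivative computation
  intro t ht
  haveI : Fact (t ∈ Set.Icc (0:ℝ) T) := ⟨ht⟩
  have hA : HasDerivWithinAt
      (fun x => ∫ s in (0:ℝ)..x, Real.exp (G s) * ∫ r in s..T, f₁ s r * (P r / (2 * α)))
      (Real.exp (G t) * ∫ r in t..T, f₁ t r * (P r / (2 * α))) (Set.Icc 0 T) t :=
    intervalIntegral.integral_hasDerivWithinAt_right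
      ((hF1cont.mono (Set.uIcc_subset_Icc (Set.left_mem_Icc.2 hT.le) ht)).intervalIntegrable)
      (hF1cont.stronglyMeasurableAtFilter_nhdsWithin measurableSet_Icc t)
      (hF1cont t ht)
  have hB : HasDerivWithinAt
      (fun x => ∫ s in (0:ℝ)..x, Real.exp (G s) * (P s / (2 * α)))
      (Real.exp (G t) * (P t / (2 * α))) (Set.Icc 0 T) t :=
    intervalIntegral.integral_hasDerivWithinAt_right
      ((hF2cont.mono (Set.uIcc_subset_Icc (Set.left_mem_Icc.2 hT.le) ht)).intervalIntegrable)
      (hF2cont.stronglyMeasurableAtFilter_nhdsWithin measurableSet_Icc t)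
      (hF2cont t ht)
  have hEder : HasDerivWithinAt (fun x => Real.exp (-G x))
      (Real.exp (-G t) * -(ω * f t)) (Set.Icc 0 T) t := (hGder t ht).neg.exp
  have hprod := hEder.mul (hA.sub hB)
  rw [funext hQ]
  refine hprod.congr_deriv ?_
  symm
  have hee : Real.exp (-G t) * Real.exp (G t) = 1 := by
    rw [← Real.exp_add]; simp
  rw [hq, hQ]
  simp only [Pi.sub_apply]
  linear_combination (P t / (2 * α) - ∫ r in t..T, f₁ t r * (P r / (2 * α))) * hee
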